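/- The function τ: ℕ → ℤ is nondecreasing on each integer interval [m_n, M_n] for 0 ≤ n ≤ 2δ−3, nondecreasing on the interval [m_{2δ−2}, ∞), and nonincreasing on each integer interval [M_n, m_{n+1}] for 0 ≤ n ≤ 2δ−3. -/

import Mathlib

set_option maxHeartbeats 800000


/-- `Δ_j = 1 + 2j − ⌈jp'/p⌉ − ⌈jq'/q⌉ − ⌈j(pq−2)/(pq−1)⌉`, the increment of the τ-function of
the negative definite Seifert manifold `Σ(−2,(p,p'),(q,q'),(pq−1,pq−2)) = −S³₁(T_{p,q})`. -/
def torusDelta (p q p' q' : ℕ) (j : ℕ) : ℤ :=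
  1 + 2 * (j : ℤ) - ⌈((j : ℚ) * (p' : ℚ)) / (p : ℚ)⌉ - ⌈((j : ℚ) * (q' : ℚ)) / (q : ℚ)⌉
    - ⌈((j : ℚ) * ((p : ℚ) * (q : ℚ) - 2)) / ((p : ℚ) * (q : ℚ) - 1)⌉

/-- `τ(m) = Σ_{j=0}^{m−1} Δ_j`. -/
def torusTau (p q p' q' : ℕ) (m : ℕ) : ℤ := ∑ j ∈ Finset.range m, torusDelta p q p' q' j

lemma torusTau_succ (p q p' q' m : ℕ) :
    torusTau p q p' q' (m + 1) = torusTau p q p' q' m + torusDelta p q p' q' m :=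
  Finset.sum_range_succ _ m

lemma torusDelta_decomp (p q p' q' : ℕ) (hp : 0 < p) (hq : 0 < q) (hpq2 : 2 ≤ p * q) (j : ℕ) :
    ∃ x y F : ℤ,
      torusDelta p q p' q' j = 1 + (j : ℤ) + F - x - y ∧
      (j : ℤ) * p' ≤ x * p ∧ x * p ≤ (j : ℤ) * p' + p - 1 ∧
      (j : ℤ) * q' ≤ y * q ∧ y * q ≤ (j : ℤ) * q' + q - 1 ∧
      ((p : ℤ) * q - 1) * F ≤ j ∧ (j : ℤ) < ((p : ℤ) * q - 1) * (F + 1) := by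
  have hp0 : (0:ℚ) < p := by exact_mod_cast hp
  have hq0 : (0:ℚ) < q := by exact_mod_cast hq
  have hpq2' : (2:ℚ) ≤ (p:ℚ) * q := by exact_mod_cast hpq2
  have hN0 : (0:ℚ) < (p:ℚ) * q - 1 := by linarith
  set x := ⌈((j : ℚ) * (p' : ℚ)) / (p : ℚ)⌉ with hxdef
  set y := ⌈((j : ℚ) * (q' : ℚ)) / (q : ℚ)⌉ with hydef
  set F := ⌊(j : ℚ) / ((p:ℚ) * q - 1)⌋ with hFdef
  refine ⟨x, y, F, ?_, ?_, ?_, ?_, ?_, ?_, ?_⟩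
  · have harg : ((j : ℚ) * ((p : ℚ) * (q : ℚ) - 2)) / ((p : ℚ) * (q : ℚ) - 1)
        = -((j:ℚ) / ((p:ℚ) * q - 1)) + (j : ℕ) := by
      field_simp
      ring
    have hz : ⌈((j : ℚ) * ((p : ℚ) * (q : ℚ) - 2)) / ((p : ℚ) * (q : ℚ) - 1)⌉ = -F + j := by
      rw [harg, Int.ceil_add_natCast, Int.ceil_neg, hFdef]
    simp only [torusDelta]
    rw [hz, ← hxdef, ← hydef]
    ring
  · have h := Int.le_ceil ((j : ℚ) * (p' : ℚ) / (p : ℚ))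
    rw [div_le_iff₀ hp0] at h
    have hQ : (((j:ℤ) * p' : ℤ) : ℚ) ≤ ((x * p : ℤ) : ℚ) := by push_cast; linarith
    exact_mod_cast hQ
  · have h := Int.ceil_lt_add_one ((j : ℚ) * (p' : ℚ) / (p : ℚ))
    have h2 : ((x:ℚ) - 1) * p < (j : ℚ) * (p' : ℚ) := (lt_div_iff₀ hp0).mp (by linarith)
    have hQ : ((x * p : ℤ) : ℚ) < (((j:ℤ) * p' + p : ℤ) : ℚ) := by push_cast; linarith
    have hZ : x * p < (j:ℤ) * p' + p := by exact_mod_cast hQ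
    linarith
  · have h := Int.le_ceil ((j : ℚ) * (q' : ℚ) / (q : ℚ))
    rw [div_le_iff₀ hq0] at h
    have hQ : (((j:ℤ) * q' : ℤ) : ℚ) ≤ ((y * q : ℤ) : ℚ) := by push_cast; linarith
    exact_mod_cast hQ
  · have h := Int.ceil_lt_add_one ((j : ℚ) * (q' : ℚ) / (q : ℚ))
    have h2 : ((y:ℚ) - 1) * q < (j : ℚ) * (q' : ℚ) := (lt_div_iff₀ hq0).mp (by linarith)
    have hQ : ((y * q : ℤ) : ℚ) < (((j:ℤ) * q' + q : ℤ) : ℚ) := by push_cast; linarith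
    have hZ : y * q < (j:ℤ) * q' + q := by exact_mod_cast hQ
    linarith
  · have h := Int.floor_le ((j : ℚ) / ((p:ℚ) * q - 1))
    rw [le_div_iff₀ hN0] at h
    have hQ : ((((p:ℤ) * q - 1) * F : ℤ) : ℚ) ≤ (((j:ℕ) : ℤ) : ℚ) := by push_cast; linarith
    exact_mod_cast hQ
  · have h := Int.lt_floor_add_one ((j : ℚ) / ((p:ℚ) * q - 1))
    rw [div_lt_iff₀ hN0] at h
    have hQ : ((((j:ℕ):ℤ) : ℤ) : ℚ) < ((((p:ℤ) * q - 1) * (F + 1) : ℤ) : ℚ) := by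
      push_cast; linarith
    exact_mod_cast hQ

lemma torusDelta_nonneg₁ (p q p' q' : ℕ) (hp : 2 ≤ p) (hq : 3 ≤ q)
    (hkey : (p':ℤ) * q + (p:ℤ) * q' = 1 + (p:ℤ) * q) (n j : ℕ)
    (h1 : (n:ℤ) * ((p:ℤ) * q - 1) ≤ j) (h2 : (j:ℤ) ≤ (n:ℤ) * ((p:ℤ) * q)) :
    0 ≤ torusDelta p q p' q' j := by
  have hp0 : (0:ℤ) < p := by exact_mod_cast (by omega : 0 < p)
  have hq0 : (0:ℤ) < q := by exact_mod_cast (by omega : 0 < q)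
  have hN0 : (0:ℤ) < (p:ℤ) * q - 1 := by nlinarith
  obtain ⟨x, y, F, hΔ, hx1, hx2, hy1, hy2, hF1, hF2⟩ :=
    torusDelta_decomp p q p' q' (by omega) (by omega) (by nlinarith) j
  have hA : x * p * q ≤ ((j:ℤ) * p' + p - 1) * q :=
    mul_le_mul_of_nonneg_right hx2 (le_of_lt hq0)
  have hB : y * q * p ≤ ((j:ℤ) * q' + q - 1) * p :=
    mul_le_mul_of_nonneg_right hy2 (le_of_lt hp0)
  have hkj : (j:ℤ) * ((p':ℤ) * q + (p:ℤ) * q') = (j:ℤ) * (1 + (p:ℤ) * q) := by rw [hkey]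
  have hxy : x + y ≤ (j:ℤ) + n + 1 := by
    have hlt : (x + y) * ((p:ℤ) * q) < ((j:ℤ) + n + 2) * ((p:ℤ) * q) := by nlinarith [hA, hB, hkj]
    have := lt_of_mul_lt_mul_right hlt (by positivity : (0:ℤ) ≤ (p:ℤ) * q)
    linarith
  have hnF : (n:ℤ) ≤ F := by
    by_contra hcon
    push_neg at hcon
    have h3 : ((p:ℤ) * q - 1) * (F + 1) ≤ ((p:ℤ) * q - 1) * n :=
      mul_le_mul_of_nonneg_left (by linarith) (le_of_lt hN0)
    nlinarith
  rw [hΔ]; linarith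

lemma torusDelta_nonneg₂ (p q p' q' : ℕ) (hp : 2 ≤ p) (hq : 3 ≤ q)
    (hkey : (p':ℤ) * q + (p:ℤ) * q' = 1 + (p:ℤ) * q) (j : ℕ)
    (h1 : ((p:ℤ) * q - p - q - 1) * ((p:ℤ) * q - 1) ≤ j) :
    0 ≤ torusDelta p q p' q' j := by
  have hp0 : (0:ℤ) < p := by exact_mod_cast (by omega : 0 < p)
  have hq0 : (0:ℤ) < q := by exact_mod_cast (by omega : 0 < q)
  have hN0 : (0:ℤ) < (p:ℤ) * q - 1 := by nlinarith
  obtain ⟨x, y, F, hΔ, hx1, hx2, hy1, hy2, hF1, hF2⟩ :=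
    torusDelta_decomp p q p' q' (by omega) (by omega) (by nlinarith) j
  have hA : x * p * q ≤ ((j:ℤ) * p' + p - 1) * q :=
    mul_le_mul_of_nonneg_right hx2 (le_of_lt hq0)
  have hB : y * q * p ≤ ((j:ℤ) * q' + q - 1) * p :=
    mul_le_mul_of_nonneg_right hy2 (le_of_lt hp0)
  have hkj : (j:ℤ) * ((p':ℤ) * q + (p:ℤ) * q') = (j:ℤ) * (1 + (p:ℤ) * q) := by rw [hkey]
  have hFbig : (p:ℤ) * q - p - q - 1 ≤ F := by
    by_contra hcon
    push_neg at hcon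
    have h3 : ((p:ℤ) * q - 1) * (F + 1) ≤ ((p:ℤ) * q - 1) * ((p:ℤ) * q - p - q - 1) :=
      mul_le_mul_of_nonneg_left (by linarith) (le_of_lt hN0)
    nlinarith
  have hxy : x + y ≤ (j:ℤ) + F + 1 := by
    have hlt : (x + y) * ((p:ℤ) * q) < ((j:ℤ) + F + 2) * ((p:ℤ) * q) := by
      nlinarith [hA, hB, hkj, hF2, hFbig]
    have := lt_of_mul_lt_mul_right hlt (by positivity : (0:ℤ) ≤ (p:ℤ) * q)
    linarith
  rw [hΔ]; linarith

lemma torusDelta_nonpos (p q p' q' : ℕ) (hp : 2 ≤ p) (hq : 3 ≤ q)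
    (hkey : (p':ℤ) * q + (p:ℤ) * q' = 1 + (p:ℤ) * q) (n j : ℕ)
    (h1 : (n:ℤ) * ((p:ℤ) * q) + 1 ≤ j) (h2 : (j:ℤ) < ((n:ℤ) + 1) * ((p:ℤ) * q - 1)) :
    torusDelta p q p' q' j ≤ 0 := by
  have hp0 : (0:ℤ) < p := by exact_mod_cast (by omega : 0 < p)
  have hq0 : (0:ℤ) < q := by exact_mod_cast (by omega : 0 < q)
  have hN0 : (0:ℤ) < (p:ℤ) * q - 1 := by nlinarith
  obtain ⟨x, y, F, hΔ, hx1, hx2, hy1, hy2, hF1, hF2⟩ :=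
    torusDelta_decomp p q p' q' (by omega) (by omega) (by nlinarith) j
  have hA : (j:ℤ) * p' * q ≤ x * p * q :=
    mul_le_mul_of_nonneg_right hx1 (le_of_lt hq0)
  have hB : (j:ℤ) * q' * p ≤ y * q * p :=
    mul_le_mul_of_nonneg_right hy1 (le_of_lt hp0)
  have hkj : (j:ℤ) * ((p':ℤ) * q + (p:ℤ) * q') = (j:ℤ) * (1 + (p:ℤ) * q) := by rw [hkey]
  have hxy : (j:ℤ) + n + 1 ≤ x + y := by
    have hlt : ((j:ℤ) + n) * ((p:ℤ) * q) < (x + y) * ((p:ℤ) * q) := by nlinarith [hA, hB, hkj]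
    have := lt_of_mul_lt_mul_right hlt (by positivity : (0:ℤ) ≤ (p:ℤ) * q)
    linarith
  have hFn : F ≤ (n:ℤ) := by
    by_contra hcon
    push_neg at hcon
    have h3 : ((p:ℤ) * q - 1) * ((n:ℤ) + 1) ≤ ((p:ℤ) * q - 1) * F :=
      mul_le_mul_of_nonneg_left (by linarith) (le_of_lt hN0)
    nlinarith
  rw [hΔ]; linarith

theorem torusTau_monotonicity (p q : ℕ) (hp : 2 ≤ p) (hpq : p < q) (hcop : Nat.Coprime p q)
    (δ : ℕ) (hδ : 2 * δ = (p - 1) * (q - 1))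
    (p' : ℕ) (hp'pos : 0 < p') (hp'lt : p' < p) (hp' : p' * q ≡ 1 [MOD p])
    (q' : ℕ) (hq'pos : 0 < q') (hq'lt : q' < q) (hq' : p * q' ≡ 1 [MOD q]) :
    (∀ n : ℕ, (n : ℤ) ≤ 2 * (δ : ℤ) - 3 →
      ∀ i j : ℕ, n * (p * q - 1) ≤ i → i ≤ j → j ≤ n * p * q + 1 →
        torusTau p q p' q' i ≤ torusTau p q p' q' j) ∧
    (∀ i j : ℕ, (2 * δ - 2) * (p * q - 1) ≤ i → i ≤ j →
        torusTau p q p' q' i ≤ torusTau p q p' q' j) ∧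
    (∀ n : ℕ, (n : ℤ) ≤ 2 * (δ : ℤ) - 3 →
      ∀ i j : ℕ, n * p * q + 1 ≤ i → i ≤ j → j ≤ (n + 1) * (p * q - 1) →
        torusTau p q p' q' j ≤ torusTau p q p' q' i) := by
  have hq3 : 3 ≤ q := by omega
  have hpq1 : 1 ≤ p * q := by
    have := Nat.mul_pos (show 0 < p by omega) (show 0 < q by omega)
    omega
  -- key arithmetic identity p'q + pq' = 1 + pq
  have hkey : (p':ℤ) * q + (p:ℤ) * q' = 1 + (p:ℤ) * q := by
    have c1 : p' * q + p * q' ≡ 1 [MOD p] := by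
      have h0 : p * q' ≡ 0 [MOD p] := (Nat.modEq_zero_iff_dvd).2 ⟨q', rfl⟩
      simpa using hp'.add h0
    have c2 : p' * q + p * q' ≡ 1 [MOD q] := by
      have h0 : p' * q ≡ 0 [MOD q] := (Nat.modEq_zero_iff_dvd).2 ⟨p', mul_comm p' q⟩
      simpa using h0.add hq'
    have combined : p' * q + p * q' ≡ 1 [MOD p * q] :=
      (Nat.modEq_and_modEq_iff_modEq_mul hcop).1 ⟨c1, c2⟩
    have hled : 1 ≤ p' * q + p * q' := by
      have : 0 < p' * q := Nat.mul_pos hp'pos (by omega)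
      omega
    have hd : p * q ∣ p' * q + p * q' - 1 := (Nat.modEq_iff_dvd' hled).1 combined.symm
    obtain ⟨k, hk⟩ := hd
    have hkZ : (p':ℤ) * q + (p:ℤ) * q' - 1 = (p:ℤ) * q * k := by
      have := congrArg (fun t : ℕ => (t : ℤ)) hk
      push_cast [Nat.cast_sub hled] at this
      linarith
    have hp0 : (0:ℤ) < p := by exact_mod_cast (by omega : 0 < p)
    have hq0 : (0:ℤ) < q := by exact_mod_cast (by omega : 0 < q)
    have hub : (p':ℤ) * q + (p:ℤ) * q' ≤ 2 * ((p:ℤ) * q) - p - q := by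
      have h1 : (p':ℤ) ≤ (p:ℤ) - 1 := by
        have : (p':ℤ) < p := by exact_mod_cast hp'lt
        linarith
      have h2 : (q':ℤ) ≤ (q:ℤ) - 1 := by
        have : (q':ℤ) < q := by exact_mod_cast hq'lt
        linarith
      have h1' : (p':ℤ) < p := by exact_mod_cast hp'lt
      nlinarith
    have hlb : (0:ℤ) < (p':ℤ) * q + (p:ℤ) * q' - 1 := by
      have h1 : (1:ℤ) ≤ p' := by exact_mod_cast hp'pos
      have h2 : (1:ℤ) ≤ q' := by exact_mod_cast hq'pos
      nlinarith
    have hpq0 : (0:ℤ) < (p:ℤ) * q := mul_pos hp0 hq0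
    have hk0 : (0:ℤ) < (k:ℤ) := by
      by_contra hc
      push_neg at hc
      have h4 : (p:ℤ) * q * k ≤ (p:ℤ) * q * 0 := mul_le_mul_of_nonneg_left hc (le_of_lt hpq0)
      linarith
    have hk2 : (k:ℤ) < 2 := by
      by_contra hc
      push_neg at hc
      have h4 : (p:ℤ) * q * 2 ≤ (p:ℤ) * q * k := mul_le_mul_of_nonneg_left hc (le_of_lt hpq0)
      linarith
    have : (k:ℤ) = 1 := by omega
    rw [this] at hkZ
    linarith
  have hδZ : 2 * (δ:ℤ) = ((p:ℤ) - 1) * ((q:ℤ) - 1) := by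
    have h := hδ
    zify [show 1 ≤ p by omega, show 1 ≤ q by omega] at h
    linear_combination h
  refine ⟨?_, ?_, ?_⟩
  · -- nondecreasing on [n(pq-1), npq+1]
    intro n _ i j hi hij hj
    revert hj
    induction j, hij using Nat.le_induction with
    | base => intro _; exact le_refl _
    | succ k hik ih =>
      intro hk1
      have hk : k ≤ n * p * q := by omega
      have hik' : torusTau p q p' q' i ≤ torusTau p q p' q' k := ih (by omega)
      have hikn : n * (p * q - 1) ≤ k := le_trans hi hik
      have hz1 : (n:ℤ) * ((p:ℤ) * q - 1) ≤ k := by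
        zify [hpq1] at hikn
        linarith
      have hz2 : (k:ℤ) ≤ (n:ℤ) * ((p:ℤ) * q) := by
        have : ((n * p * q : ℕ) : ℤ) = (n:ℤ) * ((p:ℤ) * q) := by push_cast; ring
        rw [← this]
        exact_mod_cast hk
      have hΔ := torusDelta_nonneg₁ p q p' q' hp hq3 hkey n k hz1 hz2
      rw [torusTau_succ]
      linarith
  · -- nondecreasing on [(2δ-2)(pq-1), ∞)
    intro i j hi hij
    induction j, hij using Nat.le_induction with
    | base => exact le_refl _
    | succ k hik ih =>
      have hikn : (2 * δ - 2) * (p * q - 1) ≤ k := le_trans hi hik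
      have hδ2 : 2 ≤ 2 * δ := by nlinarith [hδ, hp, hq3]
      have hz1 : ((p:ℤ) * q - p - q - 1) * ((p:ℤ) * q - 1) ≤ k := by
        zify [hpq1, hδ2] at hikn
        have he : 2 * (δ:ℤ) - 2 = (p:ℤ) * q - p - q - 1 := by rw [hδZ]; ring
        rw [he] at hikn
        linarith
      have hΔ := torusDelta_nonneg₂ p q p' q' hp hq3 hkey k hz1
      rw [torusTau_succ]
      linarith
  · -- nonincreasing on [npq+1, (n+1)(pq-1)]
    intro n _ i j hi hij hj
    revert hj
    induction j, hij using Nat.le_induction with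
    | base => intro _; exact le_refl _
    | succ k hik ih =>
      intro hk1
      have hik' : torusTau p q p' q' k ≤ torusTau p q p' q' i := ih (by omega)
      have hikn : n * p * q + 1 ≤ k := le_trans hi hik
      have hz1 : (n:ℤ) * ((p:ℤ) * q) + 1 ≤ k := by
        have : ((n * p * q + 1 : ℕ) : ℤ) = (n:ℤ) * ((p:ℤ) * q) + 1 := by push_cast; ring
        rw [← this]
        exact_mod_cast hikn
      have hz2 : (k:ℤ) < ((n:ℤ) + 1) * ((p:ℤ) * q - 1) := by
        have hk' : k + 1 ≤ (n + 1) * (p * q - 1) := hk1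
        zify [hpq1] at hk'
        linarith
      have hΔ := torusDelta_nonpos p q p' q' hp hq3 hkey n k hz1 hz2
      rw [torusTau_succ]
      linarith
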